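/- Let m ≥ 1 be an integer, δ̂ ∈ (0,1], and C₀ ≥ 0. Define 𝒫(z) = max over (a₁,…,a_m) ∈ [δ̂/2, 2δ̂⁻¹]^m of Σ_{k=1}^m a_k z_k for z ∈ ℝ^m. Let F : ℝ^m → ℝ be Lipschitz continuous such that at every point z where F is differentiable the gradient ∇F(z) lies in [δ̂, δ̂⁻¹]^m, and suppose |F(0)| ≤ C₀. Then for every z ∈ ℝ^m, F(z) ≤ 𝒫(z) − (δ̂/2) Σ_{k=1}^m |z_k| + C₀. -/

import Mathlib

open scoped BigOperators NNReal

open MeasureTheory Filter Set Topology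

set_option maxHeartbeats 1000000

/-- A Lipschitz function on `ℝ` whose derivative is a.e. bounded below by `c`
satisfies `c * (b - a) ≤ g b - g a`. -/
lemma krylov_oneD_lower {g : ℝ → ℝ} {L : ℝ≥0} (hg : LipschitzWith L g) {c : ℝ}
    (h : ∀ᵐ s : ℝ, ∃ d, HasDerivAt g d s ∧ c ≤ d) :
    ∀ a b : ℝ, a ≤ b → c * (b - a) ≤ g b - g a := by
  intro a b hab
  have hLip : ∀ x y : ℝ, |g x - g y| ≤ L * |x - y| := by
    intro x y
    have := hg.dist_le_mul x y
    simpa [Real.dist_eq] using this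
  by_cases hcL : c + L ≤ 0
  · have h1 : |g b - g a| ≤ L * |b - a| := hLip b a
    have h2 : -(L * (b - a)) ≤ g b - g a := by
      rw [abs_of_nonneg (by linarith : (0:ℝ) ≤ b - a)] at h1
      cases abs_le.1 h1 with
      | intro h _ => linarith
    nlinarith [mul_nonpos_of_nonpos_of_nonneg hcL (sub_nonneg.2 hab)]
  push_neg at hcL
  set φ : ℝ → ℝ := fun x => g x + L * x with hφ
  have hmono : Monotone φ := by
    intro x y hxy
    have h1 : |g x - g y| ≤ L * |x - y| := hLip x y
    rw [abs_of_nonpos (by linarith : x - y ≤ 0)] at h1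
    have := (abs_le.1 h1).2
    simp only [hφ]
    nlinarith
  have hcont : Continuous φ :=
    (hg.continuous.add (continuous_const.mul continuous_id))
  set S := hmono.stieltjesFunction with hS
  have hSeq : ∀ x, S x = φ x := by
    intro x
    rw [hmono.stieltjesFunction_eq]
    exact rightLim_eq_of_tendsto
      ((hcont.continuousAt.tendsto).mono_left nhdsWithin_le_nhds)
  set μ := S.measure with hμ
  have hderiv : ∀ᵐ x : ℝ, HasDerivAt φ ((μ.rnDeriv volume x).toReal) x :=
    hmono.ae_hasDerivAt
  have key : ∀ᵐ x : ℝ, ENNReal.ofReal (c + L) ≤ μ.rnDeriv volume x := by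
    filter_upwards [hderiv, h] with x hx ⟨d, hd, hcd⟩
    have hφd : HasDerivAt φ (d + L) x := by
      exact (by simpa using hd.add (((hasDerivAt_id x).const_mul (L:ℝ))) :
        HasDerivAt (g + fun y => (L:ℝ) * y) (d + L) x)
    have : (μ.rnDeriv volume x).toReal = d + L := hx.unique hφd
    refine ENNReal.ofReal_le_of_le_toReal ?_
    rw [this]; linarith
  have hineq : ENNReal.ofReal (c + L) * ENNReal.ofReal (b - a) ≤ μ (Set.Ioc a b) := by
    calc ENNReal.ofReal (c + L) * ENNReal.ofReal (b - a)
        = ∫⁻ _ in Set.Ioc a b, ENNReal.ofReal (c + L) ∂volume := by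
          rw [setLIntegral_const, Real.volume_Ioc]
      _ ≤ ∫⁻ x in Set.Ioc a b, μ.rnDeriv volume x ∂volume :=
          setLIntegral_mono_ae (μ.measurable_rnDeriv volume).aemeasurable
            (key.mono fun x hx _ => hx)
      _ ≤ μ (Set.Ioc a b) := Measure.setLIntegral_rnDeriv_le _
  rw [S.measure_Ioc, hSeq, hSeq] at hineq
  rw [← ENNReal.ofReal_mul (by linarith : (0:ℝ) ≤ c + L)] at hineq
  have hφab : 0 ≤ φ b - φ a := by linarith [hmono hab]
  have : (c + L) * (b - a) ≤ φ b - φ a :=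
    (ENNReal.ofReal_le_ofReal_iff hφab).1 hineq
  simp only [hφ] at this
  nlinarith

/-- Increments of `F` along a coordinate direction are controlled by the gradient bounds. -/
lemma krylov_seg {m : ℕ} {δ : ℝ} (hδ0 : 0 < δ) {C : ℝ≥0} {F : (Fin m → ℝ) → ℝ}
    (hF : LipschitzWith C F)
    (hgrad : ∀ (z : Fin m → ℝ) (f' : (Fin m → ℝ) →L[ℝ] ℝ), HasFDerivAt F f' z →
      ∀ k : Fin m, δ ≤ f' (Pi.single k 1) ∧ f' (Pi.single k 1) ≤ δ⁻¹)
    (k : Fin m) (x : Fin m → ℝ) (t : ℝ) (ht : 0 ≤ t) :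
    δ * t ≤ F (x + t • (Pi.single k 1 : Fin m → ℝ)) - F x ∧
      F (x + t • (Pi.single k 1 : Fin m → ℝ)) - F x ≤ δ⁻¹ * t := by
  classical
  set e : Fin m → ℝ := Pi.single k 1 with he
  set D : Set (Fin m → ℝ) := {y | DifferentiableAt ℝ F y} with hDdef
  have hDmeas : MeasurableSet D := measurableSet_of_differentiableAt ℝ F
  have hD : ∀ᵐ y : Fin m → ℝ, y ∈ D := hF.ae_differentiableAt
  -- Fubini / translation argument: a.e. line in direction `e` meets `D` a.e.
  have hsw : ∀ s : ℝ, ∀ᵐ w : Fin m → ℝ, w + s • e ∈ D := by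
    intro s
    rw [ae_iff]
    have : {w : Fin m → ℝ | ¬ w + s • e ∈ D} = (fun w => w + s • e) ⁻¹' Dᶜ := rfl
    rw [this, measure_preimage_add_right]
    rw [ae_iff] at hD
    exact hD
  have hmeas : MeasurableSet {p : ℝ × (Fin m → ℝ) | p.2 + p.1 • e ∈ D} := by
    have hc : Continuous fun p : ℝ × (Fin m → ℝ) => p.2 + p.1 • e :=
      continuous_snd.add (continuous_fst.smul continuous_const)
    exact hc.measurable hDmeas
  have hswap : ∀ᵐ w : Fin m → ℝ, ∀ᵐ s : ℝ, w + s • e ∈ D :=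
    (MeasureTheory.Measure.ae_ae_comm hmeas).1 (Filter.Eventually.of_forall hsw)
  have hGdense : Dense {w : Fin m → ℝ | ∀ᵐ s : ℝ, w + s • e ∈ D} :=
    MeasureTheory.Measure.dense_of_ae hswap
  obtain ⟨u, hu, hulim⟩ := mem_closure_iff_seq_limit.1 (hGdense x)
  -- the segment estimate at good points
  have hseg : ∀ w : Fin m → ℝ, (∀ᵐ s : ℝ, w + s • e ∈ D) →
      δ * t ≤ F (w + t • e) - F w ∧ F (w + t • e) - F w ≤ δ⁻¹ * t := by
    intro w hw
    set g : ℝ → ℝ := fun s => F (w + s • e) with hgdef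
    have hlinelip : LipschitzWith ‖e‖₊ (fun s : ℝ => w + s • e) := by
      apply LipschitzWith.of_dist_le_mul
      intro a b
      have : (w + a • e) - (w + b • e) = (a - b) • e := by
        rw [add_sub_add_left_eq_sub, sub_smul]
      rw [dist_eq_norm, this, norm_smul, dist_eq_norm]
      simp [mul_comm]
    have hline : LipschitzWith (C * ‖e‖₊) g := hF.comp hlinelip
    have hae : ∀ᵐ s : ℝ, ∃ d, HasDerivAt g d s ∧ δ ≤ d ∧ d ≤ δ⁻¹ := by
      filter_upwards [hw] with s hs
      have hfd := hs.hasFDerivAt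
      have hlineD : HasDerivAt (fun s : ℝ => w + s • e) e s := by
        simpa using ((hasDerivAt_id s).smul_const e).const_add w
      have hgd : HasDerivAt g (fderiv ℝ F (w + s • e) e) s :=
        hfd.comp_hasDerivAt s hlineD
      exact ⟨_, hgd, (hgrad _ _ hfd k).1, (hgrad _ _ hfd k).2⟩
    have h1 := krylov_oneD_lower hline
      (hae.mono fun s hs => hs.imp fun d hd => ⟨hd.1, hd.2.1⟩) 0 t ht
    have hneg : LipschitzWith (C * ‖e‖₊) (fun s => -g s) := hline.neg
    have h2 := krylov_oneD_lower (c := -δ⁻¹) hneg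
      (hae.mono fun s hs => by
        obtain ⟨d, hd, _, hdu⟩ := hs
        exact ⟨-d, hd.neg, by linarith⟩) 0 t ht
    have hg0 : g 0 = F w := by simp [hgdef]
    constructor
    · have := h1; rw [hg0] at this; simpa [hgdef] using by linarith [this]
    · rw [hg0] at h2
      have : g t - F w ≤ δ⁻¹ * t := by linarith [h2]
      simpa [hgdef] using this
  have hlim : Tendsto (fun n => F (u n + t • e) - F (u n)) atTop
      (𝓝 (F (x + t • e) - F x)) := by
    have h1 : Tendsto (fun n => u n + t • e) atTop (𝓝 (x + t • e)) :=
      hulim.add tendsto_const_nhds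
    exact ((hF.continuous.tendsto _).comp h1).sub ((hF.continuous.tendsto _).comp hulim)
  constructor
  · exact ge_of_tendsto' hlim fun n => (hseg (u n) (hu n)).1
  · exact le_of_tendsto' hlim fun n => (hseg (u n) (hu n)).2

noncomputable section

/-- `𝒫(z) = max over (a₁,…,a_m) ∈ [δ̂/2, 2δ̂⁻¹]^m of Σ_k a_k z_k`. -/
def Pcal (m : ℕ) (δhat : ℝ) (z : Fin m → ℝ) : ℝ :=
  sSup {s : ℝ | ∃ a : Fin m → ℝ,
    (∀ k, δhat / 2 ≤ a k ∧ a k ≤ 2 * δhat⁻¹) ∧ s = ∑ k, a k * z k}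

/-- Lemma 4.2 of Krylov, "An ersatz existence theorem for fully nonlinear
parabolic equations without convexity assumptions", in self-contained form:
a Lipschitz function `F` on `ℝ^m` with gradient in `[δ̂, δ̂⁻¹]^m` at points of
differentiability and `|F(0)| ≤ C₀` satisfies
`F(z) ≤ 𝒫(z) − (δ̂/2) Σ |z_k| + C₀`. -/
theorem F_le_Pcal (m : ℕ) (hm : 1 ≤ m) (δhat : ℝ) (hδhat : δhat ∈ Set.Ioc (0:ℝ) 1)
    (C₀ : ℝ) (hC₀ : 0 ≤ C₀) (F : (Fin m → ℝ) → ℝ)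
    (hlip : ∃ C : ℝ≥0, LipschitzWith C F)
    (hgrad : ∀ (z : Fin m → ℝ) (f' : (Fin m → ℝ) →L[ℝ] ℝ), HasFDerivAt F f' z →
      ∀ k : Fin m, δhat ≤ f' (Pi.single k 1) ∧ f' (Pi.single k 1) ≤ δhat⁻¹)
    (hF0 : |F 0| ≤ C₀) :
    ∀ z : Fin m → ℝ, F z ≤ Pcal m δhat z - (δhat / 2) * (∑ k, |z k|) + C₀ := by
  classical
  obtain ⟨hδ0, hδ1⟩ := hδhat
  obtain ⟨C, hF⟩ := hlip
  have hinv1 : (1:ℝ) ≤ δhat⁻¹ := by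
    rw [le_inv_comm₀ one_pos hδ0]
    simpa using hδ1
  have hseg := fun k x t ht => krylov_seg hδ0 hF hgrad k x t ht
  intro z
  set c : Fin m → ℝ := fun k => if 0 ≤ z k then δhat⁻¹ else δhat with hc
  -- telescoping along coordinates
  have tele : ∀ s : Finset (Fin m),
      F (fun i => if i ∈ s then z i else 0) ≤ F 0 + ∑ k ∈ s, c k * z k := by
    intro s
    induction s using Finset.induction_on with
    | empty =>
      simp only [Finset.notMem_empty, if_false, Finset.sum_empty, add_zero]
      exact le_rfl
    | @insert a s ha ih =>
      have hxy : (fun i => if i ∈ insert a s then z i else 0)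
          = (fun i => if i ∈ s then z i else 0) + z a • (Pi.single a 1 : Fin m → ℝ) := by
        funext i
        by_cases hi : i = a
        · subst hi
          simp [ha, Pi.single_eq_same]
        · simp [Finset.mem_insert, hi, Pi.single_eq_of_ne hi]
      rw [hxy, Finset.sum_insert ha]
      set x0 : Fin m → ℝ := fun i => if i ∈ s then z i else 0 with hx0
      by_cases hza : 0 ≤ z a
      · have h := (hseg a x0 (z a) hza).2
        have hca : c a = δhat⁻¹ := by simp [hc, hza]
        rw [hca]; linarith
      · push_neg at hza
        have h := (hseg a (x0 + z a • (Pi.single a 1 : Fin m → ℝ)) (-(z a)) (by linarith)).1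
        have hx : (x0 + z a • (Pi.single a 1 : Fin m → ℝ)) + (-(z a)) • (Pi.single a 1 : Fin m → ℝ) = x0 := by
          rw [add_assoc, ← add_smul]
          simp
        rw [hx] at h
        have hca : c a = δhat := by simp [hc, not_le.2 hza]
        rw [hca]; linarith
  have hFz : F z ≤ F 0 + ∑ k, c k * z k := by
    have := tele Finset.univ
    simpa using this
  -- the maximizing coefficients
  set a : Fin m → ℝ := fun k => if 0 ≤ z k then δhat⁻¹ + δhat / 2 else δhat / 2 with hadef
  have ha_mem : ∀ k, δhat / 2 ≤ a k ∧ a k ≤ 2 * δhat⁻¹ := by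
    intro k
    by_cases h : 0 ≤ z k <;> simp only [hadef, h, if_true, if_false] <;>
      constructor <;> nlinarith
  have hsum : ∑ k, a k * z k = ∑ k, c k * z k + (δhat / 2) * ∑ k, |z k| := by
    rw [Finset.mul_sum, ← Finset.sum_add_distrib]
    apply Finset.sum_congr rfl
    intro k _
    by_cases h : 0 ≤ z k
    · simp only [hadef, hc, h, if_true, abs_of_nonneg h]; ring
    · push_neg at h
      simp only [hadef, hc, not_le.2 h, if_false, abs_of_neg h]; ring
  have hP : ∑ k, a k * z k ≤ Pcal m δhat z := by
    apply le_csSup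
    · refine ⟨∑ k, 2 * δhat⁻¹ * |z k|, ?_⟩
      rintro s ⟨b, hb, rfl⟩
      apply Finset.sum_le_sum
      intro k _
      calc b k * z k ≤ |b k * z k| := le_abs_self _
        _ = |b k| * |z k| := abs_mul _ _
        _ ≤ 2 * δhat⁻¹ * |z k| := by
            apply mul_le_mul_of_nonneg_right _ (abs_nonneg _)
            rw [abs_of_nonneg (le_trans (by positivity) (hb k).1)]
            exact (hb k).2
    · exact ⟨a, ha_mem, rfl⟩
  have hF0' : F 0 ≤ C₀ := le_trans (le_abs_self _) hF0
  linarith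

end
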